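/- arXiv:2602.17200 — 2 statements merged into one kernel-verified Lean document; each statement's English description precedes it below -/
import Mathlib

section
/- Let (Ω, μ) be a probability space, let A be a fixed real d × m matrix with AᵀA positive definite, and let X : Ω → ℝ^{d×m} be a random matrix that is entrywise integrable with ∫ X dμ = 0 (entrywise) and such that ω ↦ X(ω)ᵀX(ω) is entrywise integrable. Then det( ∫ (A + X(ω))ᵀ(A + X(ω)) dμ(ω) ) ≥ det(AᵀA). -/
open MeasureTheory Matrix

/-- The determinant of a real positive semidefinite matrix is nonnegative. -/
lemma psd_det_nonneg {m : ℕ} {T : Matrix (Fin m) (Fin m) ℝ} (hT : T.PosSemidef) :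
    0 ≤ T.det := by
  rw [hT.isHermitian.det_eq_prod_eigenvalues]
  exact Finset.prod_nonneg fun i _ => by simpa using hT.eigenvalues_nonneg i

/-- For a real positive semidefinite matrix `T`, `det (1 + T) ≥ 1`. -/
lemma one_le_det_one_add_psd {m : ℕ} {T : Matrix (Fin m) (Fin m) ℝ} (hT : T.PosSemidef) :
    1 ≤ (1 + T).det := by
  have hH := hT.isHermitian
  have hU : (hH.eigenvectorUnitary : Matrix (Fin m) (Fin m) ℝ) *
      star (hH.eigenvectorUnitary : Matrix (Fin m) (Fin m) ℝ) = 1 :=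
    (Matrix.mem_unitaryGroup_iff).mp hH.eigenvectorUnitary.2
  have h1 : (1 : Matrix (Fin m) (Fin m) ℝ) + T =
      (hH.eigenvectorUnitary : Matrix (Fin m) (Fin m) ℝ) *
        (1 + diagonal (RCLike.ofReal ∘ hH.eigenvalues)) *
        star (hH.eigenvectorUnitary : Matrix (Fin m) (Fin m) ℝ) := by
    rw [mul_add, add_mul, mul_one, hU]
    congr 1
    exact hH.spectral_theorem
  have h2 : ((1 : Matrix (Fin m) (Fin m) ℝ) + T).det =
      ((1 : Matrix (Fin m) (Fin m) ℝ) + diagonal (RCLike.ofReal ∘ hH.eigenvalues)).det := by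
    rw [h1, det_mul, det_mul, mul_right_comm, ← det_mul, hU, det_one, one_mul]
  rw [h2, ← diagonal_one, diagonal_add, det_diagonal]
  calc (1 : ℝ) = ∏ _i : Fin m, (1 : ℝ) := by simp
    _ ≤ ∏ i, ((1 : Fin m → ℝ) i + (RCLike.ofReal ∘ hH.eigenvalues) i) := by
        refine Finset.prod_le_prod (fun i _ => zero_le_one) fun i _ => ?_
        have := hT.eigenvalues_nonneg i
        simp only [Pi.one_apply, Function.comp_apply, RCLike.ofReal_real_eq_id, id]
        linarith

open scoped MatrixOrder in
/-- For real matrices, `P` positive definite and `S` positive semidefinite imply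
`det P ≤ det (P + S)`. -/
lemma det_le_det_add_psd {m : ℕ} {P S : Matrix (Fin m) (Fin m) ℝ}
    (hP : P.PosDef) (hS : S.PosSemidef) : P.det ≤ (P + S).det := by
  have hPsd := hP.posSemidef
  set B := CFC.sqrt P with hBdef
  have hBpsd : B.PosSemidef := (CFC.sqrt_nonneg P).posSemidef
  have hBB : B * B = P := CFC.sqrt_mul_sqrt_self P hPsd.nonneg
  have hdetBB : B.det * B.det = P.det := by rw [← det_mul, hBB]
  have hdetBne : B.det ≠ 0 := by
    intro h
    rw [h, mul_zero] at hdetBB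
    exact hP.det_pos.ne' hdetBB.symm
  have hBunit : IsUnit B.det := isUnit_iff_ne_zero.mpr hdetBne
  have hBinv : B * B⁻¹ = 1 := mul_nonsing_inv B hBunit
  have hBinv' : B⁻¹ * B = 1 := nonsing_inv_mul B hBunit
  set T := B⁻¹ * S * B⁻¹ with hTdef
  have hBinvH : (B⁻¹)ᴴ = B⁻¹ := by
    rw [conjTranspose_nonsing_inv, hBpsd.isHermitian.eq]
  have hT : T.PosSemidef := by
    have := hS.conjTranspose_mul_mul_same (B := B⁻¹)
    rwa [hBinvH] at this
  have key : P + S = B * (1 + T) * B := by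
    have h3 : B * (B⁻¹ * S * B⁻¹) * B = (B * B⁻¹) * S * (B⁻¹ * B) := by
      simp only [Matrix.mul_assoc]
    rw [mul_add, mul_one, add_mul, hBB, hTdef, h3, hBinv, hBinv', one_mul, mul_one]
  have hdetBnonneg : 0 ≤ B.det := psd_det_nonneg hBpsd
  have h1T := one_le_det_one_add_psd hT
  calc P.det = B.det * 1 * B.det := by rw [mul_one, hdetBB]
    _ ≤ B.det * (1 + T).det * B.det := by
        have h0 : 0 ≤ B.det * B.det := mul_nonneg hdetBnonneg hdetBnonneg
        nlinarith
    _ = (P + S).det := by rw [key, det_mul, det_mul]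

/-- **Expected Gram determinant does not decrease under a zero-mean random perturbation.**
Let `(Ω, μ)` be a probability space, `A` a fixed real `d × m` matrix with `Aᵀ A` positive
definite, and `X : Ω → ℝ^{d×m}` a random matrix that is entrywise integrable with entrywise
mean zero, and such that `ω ↦ (X ω)ᵀ * (X ω)` is entrywise integrable. Then
`det (E[(A + X)ᵀ (A + X)]) ≥ det (Aᵀ A)`. -/
theorem det_expected_gram_ge {Ω : Type*} [MeasurableSpace Ω] (μ : Measure Ω)
    [IsProbabilityMeasure μ] {d m : ℕ}
    (A : Matrix (Fin d) (Fin m) ℝ) (hA : (Aᵀ * A).PosDef)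
    (X : Ω → Matrix (Fin d) (Fin m) ℝ)
    (hXint : ∀ i j, Integrable (fun ω => X ω i j) μ)
    (hXmean : ∀ i j, ∫ ω, X ω i j ∂μ = 0)
    (hXXint : ∀ i j, Integrable (fun ω => ((X ω)ᵀ * X ω) i j) μ) :
    (Matrix.of fun i j => ∫ ω, ((A + X ω)ᵀ * (A + X ω)) i j ∂μ).det ≥ (Aᵀ * A).det := by
  classical
  set M : Matrix (Fin m) (Fin m) ℝ := Matrix.of fun i j => ∫ ω, ((X ω)ᵀ * X ω) i j ∂μ with hMdef
  have hint2 : ∀ i j, Integrable (fun ω => (Aᵀ * X ω) i j) μ := by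
    intro i j
    simp only [Matrix.mul_apply, transpose_apply]
    exact integrable_finset_sum _ fun k _ => (hXint k j).const_mul _
  have hint3 : ∀ i j, Integrable (fun ω => ((X ω)ᵀ * A) i j) μ := by
    intro i j
    simp only [Matrix.mul_apply, transpose_apply]
    exact integrable_finset_sum _ fun k _ => (hXint k i).mul_const _
  have hmean2 : ∀ i j, ∫ ω, (Aᵀ * X ω) i j ∂μ = 0 := by
    intro i j
    simp only [Matrix.mul_apply, transpose_apply]
    rw [integral_finset_sum _ fun k _ => (hXint k j).const_mul _]
    simp [integral_const_mul, hXmean]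
  have hmean3 : ∀ i j, ∫ ω, ((X ω)ᵀ * A) i j ∂μ = 0 := by
    intro i j
    simp only [Matrix.mul_apply, transpose_apply]
    rw [integral_finset_sum _ fun k _ => (hXint k i).mul_const _]
    simp [integral_mul_const, hXmean]
  have hEq : (Matrix.of fun i j => ∫ ω, ((A + X ω)ᵀ * (A + X ω)) i j ∂μ) = Aᵀ * A + M := by
    ext i j
    have hexp : ∀ ω, ((A + X ω)ᵀ * (A + X ω)) i j
        = (Aᵀ * A) i j + ((Aᵀ * X ω) i j + (((X ω)ᵀ * A) i j + ((X ω)ᵀ * X ω) i j)) := by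
      intro ω
      rw [transpose_add, Matrix.add_mul, Matrix.mul_add, Matrix.mul_add]
      simp only [Matrix.add_apply]
      ring
    have hg1 : Integrable (fun ω =>
        (Aᵀ * X ω) i j + (((X ω)ᵀ * A) i j + ((X ω)ᵀ * X ω) i j)) μ :=
      (hint2 i j).add ((hint3 i j).add (hXXint i j))
    have hg2 : Integrable (fun ω => ((X ω)ᵀ * A) i j + ((X ω)ᵀ * X ω) i j) μ :=
      (hint3 i j).add (hXXint i j)
    simp only [Matrix.of_apply, hexp]
    rw [integral_add (integrable_const _) hg1, integral_add (hint2 i j) hg2,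
      integral_add (hint3 i j) (hXXint i j), integral_const, hmean2, hmean3]
    simp [hMdef, Matrix.add_apply]
  have hsymPt : ∀ ω (i j : Fin m), ((X ω)ᵀ * X ω) j i = ((X ω)ᵀ * X ω) i j := by
    intro ω i j
    simp [Matrix.mul_apply, transpose_apply, mul_comm]
  have hMsym : M.IsHermitian := by
    ext i j
    simp only [conjTranspose_apply, Matrix.of_apply, star_trivial, hMdef]
    simp only [hsymPt]
  have hMpsd : M.PosSemidef := by
    refine PosSemidef.of_dotProduct_mulVec_nonneg hMsym fun x => ?_
    have hstar : star x = x := by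
      funext i; simp
    rw [hstar]
    have hsum : dotProduct x (M *ᵥ x) = ∑ i, ∑ j, x i * (M i j * x j) := by
      simp [dotProduct, mulVec, Finset.mul_sum]
    have hswap : ∀ i j, x i * (M i j * x j)
        = ∫ ω, x i * (((X ω)ᵀ * X ω) i j * x j) ∂μ := by
      intro i j
      rw [integral_const_mul, integral_mul_const]
      simp [hMdef]
    have hintg : ∀ i j, Integrable (fun ω => x i * (((X ω)ᵀ * X ω) i j * x j)) μ :=
      fun i j => ((hXXint i j).mul_const _).const_mul _
    have h2 : ∑ i, ∑ j, x i * (M i j * x j)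
        = ∫ ω, ∑ i, ∑ j, x i * (((X ω)ᵀ * X ω) i j * x j) ∂μ := by
      calc ∑ i, ∑ j, x i * (M i j * x j)
          = ∑ i, ∑ j, ∫ ω, x i * (((X ω)ᵀ * X ω) i j * x j) ∂μ :=
            Finset.sum_congr rfl fun i _ => Finset.sum_congr rfl fun j _ => hswap i j
        _ = ∑ i, ∫ ω, ∑ j, x i * (((X ω)ᵀ * X ω) i j * x j) ∂μ :=
            Finset.sum_congr rfl fun i _ =>
              (integral_finset_sum _ fun j _ => hintg i j).symm
        _ = ∫ ω, ∑ i, ∑ j, x i * (((X ω)ᵀ * X ω) i j * x j) ∂μ :=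
            (integral_finset_sum _ fun i _ =>
              integrable_finset_sum _ fun j _ => hintg i j).symm
    rw [hsum, h2]
    refine integral_nonneg fun ω => ?_
    have hkey : ∑ i, ∑ j, x i * (((X ω)ᵀ * X ω) i j * x j)
        = dotProduct (X ω *ᵥ x) (X ω *ᵥ x) := by
      have : ∑ i, ∑ j, x i * (((X ω)ᵀ * X ω) i j * x j)
          = dotProduct x (((X ω)ᵀ * X ω) *ᵥ x) := by
        simp [dotProduct, mulVec, Finset.mul_sum]
      rw [this, ← mulVec_mulVec, dotProduct_mulVec, vecMul_transpose]
    rw [hkey]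
    exact Finset.sum_nonneg fun k _ => mul_self_nonneg _
  rw [ge_iff_le, hEq]
  exact det_le_det_add_psd hA hMpsd
end

section
/- Strict determinant increase of the expected GASS Gram matrix. Let B ≥ 2, let e₁, …, e_B ∈ ℝᵈ, and let t, u ∈ ℝᵈ be orthonormal vectors. For δ = ((a₁, …, a_B), (b₁, …, b_B)) ∈ ℝ^B × ℝ^B define ẽᵢ(δ) = eᵢ + aᵢ t + bᵢ u, edge vectors vᵢ(δ) = ẽᵢ(δ) − ẽ₁(δ) for i = 2, …, B, and the Gram matrix G̃(δ) with G̃(δ)ᵢⱼ = ⟨vᵢ(δ), vⱼ(δ)⟩. Let δ be distributed as the product of i.i.d. uniform distributions on [−r₁, r₁] for the aᵢ and on [−r₂, r₂] for the bᵢ, all independent. If r₁² + r₂² > 0, then det( E[G̃(δ)] ) > det( G̃(0) ). -/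
open MeasureTheory

/-- The uniform probability distribution on `[-r, r]`; for `r = 0` this is the Dirac mass
at `0`. -/
noncomputable def unifIcc (r : ℝ) : Measure ℝ :=
  if r = 0 then Measure.dirac 0
  else ((2 * r).toNNReal)⁻¹ • volume.restrict (Set.Icc (-r) r)

instance (r : ℝ) : SigmaFinite (unifIcc r) := by
  unfold unifIcc; split <;> infer_instance

/-- Product measure: `B` i.i.d. uniform shifts `aᵢ` on `[-r₁, r₁]` and `B` i.i.d. uniform
shifts `bᵢ` on `[-r₂, r₂]`, all `2B` coordinates independent. -/
noncomputable def gassMeasure (B : ℕ) (r₁ r₂ : ℝ) :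
    Measure ((Fin B → ℝ) × (Fin B → ℝ)) :=
  (Measure.pi fun _ => unifIcc r₁).prod (Measure.pi fun _ => unifIcc r₂)

/-- Perturbed points `ẽᵢ(δ) = eᵢ + aᵢ • t + bᵢ • u` where `δ = (a, b)`. -/
noncomputable def gassPert {d B : ℕ} (e : Fin B → EuclideanSpace ℝ (Fin d))
    (t u : EuclideanSpace ℝ (Fin d)) (δ : (Fin B → ℝ) × (Fin B → ℝ)) (i : Fin B) :
    EuclideanSpace ℝ (Fin d) :=
  e i + δ.1 i • t + δ.2 i • u

/-- Edge vectors `vᵢ(δ) = ẽᵢ₊₁(δ) - ẽ₁(δ)`, for `i = 2, …, B` (indexed by `Fin (B - 1)`). -/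
noncomputable def gassEdge {d B : ℕ} (e : Fin B → EuclideanSpace ℝ (Fin d))
    (t u : EuclideanSpace ℝ (Fin d)) (δ : (Fin B → ℝ) × (Fin B → ℝ))
    (j : Fin (B - 1)) : EuclideanSpace ℝ (Fin d) :=
  gassPert e t u δ ⟨j.1 + 1, by have := j.2; omega⟩ -
    gassPert e t u δ ⟨0, by have := j.2; omega⟩

/-- The `(B-1) × (B-1)` Gram matrix of the edge vectors, `G̃(δ)ᵢⱼ = ⟨vᵢ(δ), vⱼ(δ)⟩`. -/
noncomputable def gassGram {d B : ℕ} (e : Fin B → EuclideanSpace ℝ (Fin d))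
    (t u : EuclideanSpace ℝ (Fin d)) (δ : (Fin B → ℝ) × (Fin B → ℝ)) :
    Matrix (Fin (B - 1)) (Fin (B - 1)) ℝ :=
  Matrix.of fun i j => inner ℝ (gassEdge e t u δ i) (gassEdge e t u δ j)

lemma unifIcc_prob {r : ℝ} (hr : 0 ≤ r) : IsProbabilityMeasure (unifIcc r) := by
  unfold unifIcc
  split
  · infer_instance
  · rename_i h
    have hr' : (0:ℝ) < 2 * r := by cases hr.lt_or_eq with
      | inl h' => linarith
      | inr h' => exact absurd h'.symm h
    constructor
    rw [Measure.smul_apply, Measure.restrict_apply_univ, Real.volume_Icc]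
    rw [show r - -r = 2*r by ring, ← Real.toNNReal_coe (r := (2*r).toNNReal)]
    rw [Real.coe_toNNReal _ hr'.le]
    rw [show ENNReal.ofReal (2*r) = ((2*r).toNNReal : ENNReal) from rfl]
    rw [show ((2 * r).toNNReal⁻¹ • ((2 * r).toNNReal : ENNReal)) =
        (((2 * r).toNNReal⁻¹ * (2 * r).toNNReal : NNReal) : ENNReal) from rfl,
      inv_mul_cancel₀ (Real.toNNReal_pos.mpr hr').ne', ENNReal.coe_one]

lemma unifIcc_integrable_id {r : ℝ} : Integrable (fun x : ℝ => x) (unifIcc r) := by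
  unfold unifIcc
  split
  · exact (integrable_const _).congr (ae_eq_dirac fun x : ℝ => x).symm
  · exact ((continuous_id.integrableOn_Icc (μ := volume)).integrable.smul_measure ENNReal.coe_ne_top)

lemma unifIcc_integrable_sq {r : ℝ} : Integrable (fun x : ℝ => x * x) (unifIcc r) := by
  unfold unifIcc
  split
  · exact (integrable_const _).congr (ae_eq_dirac fun x : ℝ => x * x).symm
  · exact (((continuous_id.mul continuous_id).integrableOn_Icc (μ := volume)).integrable.smul_measure
      ENNReal.coe_ne_top)

lemma unifIcc_integral_id {r : ℝ} (hr : 0 ≤ r) : ∫ x, x ∂unifIcc r = 0 := by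
  unfold unifIcc
  split
  · simp
  · rename_i h
    have hr' : (0:ℝ) < 2 * r := lt_of_le_of_ne (by linarith) (fun h' => h (by linarith [h'.symm]))
    rw [integral_smul_nnreal_measure]
    rw [integral_Icc_eq_integral_Ioc, ← intervalIntegral.integral_of_le (by linarith : -r ≤ r)]
    rw [integral_id]
    simp [neg_pow]

lemma unifIcc_integral_sq {r : ℝ} (hr : 0 ≤ r) : ∫ x, x * x ∂unifIcc r = r ^ 2 / 3 := by
  unfold unifIcc
  split
  · rename_i h; subst h; simp
  · rename_i h
    have hr0 : 0 < r := lt_of_le_of_ne hr (Ne.symm h)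
    have hr' : (0:ℝ) < 2 * r := by linarith
    rw [integral_smul_nnreal_measure]
    simp_rw [← pow_two]
    rw [integral_Icc_eq_integral_Ioc, ← intervalIntegral.integral_of_le (by linarith : -r ≤ r)]
    rw [integral_pow]
    rw [NNReal.smul_def, NNReal.coe_inv, Real.coe_toNNReal _ hr'.le, smul_eq_mul]
    rw [show (-r : ℝ) ^ (2+1) = - r^(2+1) by ring]
    field_simp
    ring

section PiMoments

variable {B : ℕ}

lemma integral_pi_prod (μ : Measure ℝ) [SigmaFinite μ] (f : Fin B → ℝ → ℝ) :
    ∫ a : Fin B → ℝ, ∏ k, f k (a k) ∂(Measure.pi fun _ => μ) = ∏ k, ∫ x, f k x ∂μ := by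
  letI : MeasureSpace ℝ := ⟨μ⟩
  exact MeasureTheory.integral_fintype_prod_eq_prod (μ := fun _ => μ) f

lemma integrable_pi_prod (μ : Measure ℝ) [SigmaFinite μ] (f : Fin B → ℝ → ℝ)
    (hf : ∀ k, Integrable (f k) μ) :
    Integrable (fun a : Fin B → ℝ => ∏ k, f k (a k)) (Measure.pi fun _ => μ) := by
  letI : MeasureSpace ℝ := ⟨μ⟩
  exact MeasureTheory.Integrable.fintype_prod hf

variable (μ : Measure ℝ) [IsProbabilityMeasure μ]

lemma integrable_pi_eval (hid : Integrable (fun x : ℝ => x) μ) (i : Fin B) :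
    Integrable (fun a : Fin B → ℝ => a i) (Measure.pi fun _ => μ) := by
  have h := integrable_pi_prod μ (fun k (x : ℝ) => if k = i then x else 1)
    (fun k => by by_cases h : k = i <;> simp [h, hid])
  refine h.congr (Filter.Eventually.of_forall fun a => ?_)
  simp

lemma integral_pi_eval (hm1 : ∫ x, x ∂μ = 0) (i : Fin B) :
    ∫ a : Fin B → ℝ, a i ∂(Measure.pi fun _ => μ) = 0 := by
  have h := integral_pi_prod μ (fun k (x : ℝ) => if k = i then x else 1)
  simp only [Finset.prod_ite_eq', Finset.mem_univ, if_true] at h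
  rw [h, Finset.prod_eq_zero (Finset.mem_univ i)]
  simp [hm1]

lemma integrable_pi_mul (hid : Integrable (fun x : ℝ => x) μ)
    (hsq : Integrable (fun x : ℝ => x * x) μ) (i j : Fin B) :
    Integrable (fun a : Fin B → ℝ => a i * a j) (Measure.pi fun _ => μ) := by
  have h := integrable_pi_prod μ
    (fun k (x : ℝ) => (if k = i then x else 1) * (if k = j then x else 1))
    (fun k => by
      by_cases h : k = i <;> by_cases h' : k = j
      · simp only [if_pos h, if_pos h']; exact hsq
      · simp only [if_pos h, if_neg h', mul_one]; exact hid
      · simp only [if_neg h, if_pos h', one_mul]; exact hid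
      · simp only [if_neg h, if_neg h', mul_one]; exact integrable_const 1)
  refine h.congr (Filter.Eventually.of_forall fun a => ?_)
  simp only [Finset.prod_mul_distrib, Finset.prod_ite_eq', Finset.mem_univ, if_true]

lemma integral_pi_mul (hm1 : ∫ x, x ∂μ = 0) (i j : Fin B) :
    ∫ a : Fin B → ℝ, a i * a j ∂(Measure.pi fun _ => μ) =
      if i = j then ∫ x, x * x ∂μ else 0 := by
  have h := integral_pi_prod μ
    (fun k (x : ℝ) => (if k = i then x else 1) * (if k = j then x else 1))
  simp only [Finset.prod_mul_distrib, Finset.prod_ite_eq', Finset.mem_univ, if_true] at h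
  rw [h]
  by_cases hij : i = j
  · subst hij
    simp only [if_true]
    rw [Finset.prod_congr rfl (g := fun k => if k = i then ∫ x, x * x ∂μ else 1)
      (fun k _ => by by_cases h : k = i <;> simp [h])]
    simp
  · rw [if_neg hij, Finset.prod_eq_zero (Finset.mem_univ i)]
    simp only [if_pos rfl, if_neg hij, mul_one]
    exact hm1

end PiMoments

section Lift
variable {α β : Type*} [MeasurableSpace α] [MeasurableSpace β]
  (μ : Measure α) (ν : Measure β) [IsProbabilityMeasure μ] [IsProbabilityMeasure ν]

lemma integrable_lift_fst {g : α → ℝ} (hg : Integrable g μ) :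
    Integrable (fun z : α × β => g z.1) (μ.prod ν) := by
  have hmap : (μ.prod ν).map Prod.fst = μ := by simp
  exact (integrable_map_measure (by rw [hmap]; exact hg.1)
    measurable_fst.aemeasurable).mp (by rw [hmap]; exact hg)

lemma integrable_lift_snd {g : β → ℝ} (hg : Integrable g ν) :
    Integrable (fun z : α × β => g z.2) (μ.prod ν) := by
  have hmap : (μ.prod ν).map Prod.snd = ν := by simp
  exact (integrable_map_measure (by rw [hmap]; exact hg.1)
    measurable_snd.aemeasurable).mp (by rw [hmap]; exact hg)

lemma integral_lift_fst {g : α → ℝ} (hg : AEStronglyMeasurable g μ) :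
    ∫ z, g z.1 ∂(μ.prod ν) = ∫ x, g x ∂μ := by
  have hmap : (μ.prod ν).map Prod.fst = μ := by simp
  rw [← integral_map measurable_fst.aemeasurable (by rw [hmap]; exact hg), hmap]

lemma integral_lift_snd {g : β → ℝ} (hg : AEStronglyMeasurable g ν) :
    ∫ z, g z.2 ∂(μ.prod ν) = ∫ x, g x ∂ν := by
  have hmap : (μ.prod ν).map Prod.snd = ν := by simp
  rw [← integral_map measurable_snd.aemeasurable (by rw [hmap]; exact hg), hmap]

end Lift

lemma one_add_prod_le_prod_one_add {ι : Type*} (s : Finset ι) (f : ι → ℝ) :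
    s.Nonempty → (∀ i ∈ s, 0 ≤ f i) → 1 + ∏ i ∈ s, f i ≤ ∏ i ∈ s, (1 + f i) := by
  induction s using Finset.cons_induction with
  | empty => intro h; simp at h
  | cons a s ha ih =>
    intro _ hf
    rw [Finset.prod_cons, Finset.prod_cons]
    have h1 : 0 ≤ f a := hf a (Finset.mem_cons_self a s)
    have h2 : ∀ i ∈ s, 0 ≤ f i := fun i hi => hf i (Finset.mem_cons_of_mem hi)
    have h3 : 0 ≤ ∏ i ∈ s, f i := Finset.prod_nonneg h2
    rcases s.eq_empty_or_nonempty with rfl | hs'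
    · simp
    · have h4 := ih hs' h2
      nlinarith [mul_le_mul_of_nonneg_left h4 (by linarith : (0:ℝ) ≤ f a)]

lemma det_one_add_of_posSemidef {n : Type*} [Fintype n] [DecidableEq n] [Nonempty n]
    {M : Matrix n n ℝ} (hM : M.PosSemidef) : 1 + M.det ≤ (1 + M).det := by
  have hspec := hM.1.spectral_theorem
  set U : Matrix n n ℝ := (hM.1.eigenvectorUnitary : Matrix n n ℝ) with hU
  have hUU : U * star U = 1 :=
    (Matrix.mem_unitaryGroup_iff).mp (hM.1.eigenvectorUnitary).2
  have hUU' : star U * U = 1 :=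
    (Matrix.mem_unitaryGroup_iff').mp (hM.1.eigenvectorUnitary).2
  set D : Matrix n n ℝ := Matrix.diagonal (RCLike.ofReal ∘ hM.1.eigenvalues) with hD
  have h1M : 1 + M = U * (1 + D) * star U := by
    rw [Matrix.mul_add, Matrix.add_mul, mul_one, hspec, Unitary.conjStarAlgAut_apply, hUU]
  have hdet : (1 + M).det = (1 + D).det := by
    rw [h1M, Matrix.det_mul, Matrix.det_mul, mul_comm, ← mul_assoc, ← Matrix.det_mul, hUU',
      Matrix.det_one, one_mul]
  have hDdet : (1 + D).det = ∏ i, (1 + hM.1.eigenvalues i) := by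
    rw [hD, ← Matrix.diagonal_one, Matrix.diagonal_add, Matrix.det_diagonal]
    simp
  have hMdet : M.det = ∏ i, hM.1.eigenvalues i := by
    simpa using hM.1.det_eq_prod_eigenvalues
  rw [hdet, hDdet, hMdet]
  exact one_add_prod_le_prod_one_add Finset.univ _ Finset.univ_nonempty
    (fun i _ => hM.eigenvalues_nonneg i)

open scoped MatrixOrder in
lemma det_lt_det_add_of_posDef {n : Type*} [Fintype n] [DecidableEq n] [Nonempty n]
    {A P : Matrix n n ℝ} (hA : A.PosSemidef) (hP : P.PosDef) : A.det < (A + P).det := by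
  set S := CFC.sqrt P with hSdef
  have hSpsd : S.PosSemidef := Matrix.nonneg_iff_posSemidef.mp (CFC.sqrt_nonneg P)
  have hSS : S * S = P := CFC.sqrt_mul_sqrt_self P hP.posSemidef.nonneg
  have hdetP : 0 < P.det := hP.det_pos
  have hdetS : S.det * S.det = P.det := by rw [← Matrix.det_mul, hSS]
  have hdetS0 : S.det ≠ 0 := by
    intro h; rw [h, mul_zero] at hdetS; exact hdetP.ne' hdetS.symm
  have hSunit : IsUnit S.det := isUnit_iff_ne_zero.mpr hdetS0
  have hSinv : S * S⁻¹ = 1 := Matrix.mul_nonsing_inv S hSunit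
  have hSinv' : S⁻¹ * S = 1 := Matrix.nonsing_inv_mul S hSunit
  have hSinvherm : (S⁻¹).IsHermitian := hSpsd.1.inv
  set M := S⁻¹ * A * S⁻¹ with hMdef
  have hMpsd : M.PosSemidef := by
    have := hA.mul_mul_conjTranspose_same S⁻¹
    rwa [hSinvherm.eq] at this
  have hSMS : S * M * S = A := by
    have : S * M * S = (S * S⁻¹) * A * (S⁻¹ * S) := by rw [hMdef]; noncomm_ring
    rw [this, hSinv, hSinv', one_mul, mul_one]
  have hAP : A + P = S * (1 + M) * S := by
    rw [Matrix.mul_add, Matrix.add_mul, mul_one, hSS, hSMS, add_comm]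
  have hMdet : M.det = S⁻¹.det * A.det * S⁻¹.det := by
    rw [hMdef, Matrix.det_mul, Matrix.det_mul]
  have hSinvdet : S.det * S⁻¹.det = 1 := by
    rw [← Matrix.det_mul, hSinv, Matrix.det_one]
  have hdetA : P.det * M.det = A.det := by
    rw [← hdetS, hMdet]
    linear_combination A.det * (S.det * S⁻¹.det + 1) * hSinvdet
  have hdet : (A + P).det = P.det * (1 + M).det := by
    rw [hAP, Matrix.det_mul, Matrix.det_mul, ← hdetS]; ring
  have hineq := det_one_add_of_posSemidef hMpsd
  calc A.det < A.det + P.det := by linarith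
    _ = P.det * (1 + M.det) := by rw [mul_add, mul_one, hdetA]; ring
    _ ≤ P.det * (1 + M).det := mul_le_mul_of_nonneg_left hineq hdetP.le
    _ = (A + P).det := hdet.symm

section GassAux

/-- index `i+1` in `Fin B`. -/
def gidx1 {B : ℕ} (j : Fin (B - 1)) : Fin B := ⟨j.1 + 1, by have := j.2; omega⟩
/-- index `0` in `Fin B`. -/
def gidx0 {B : ℕ} (j : Fin (B - 1)) : Fin B := ⟨0, by have := j.2; omega⟩

/-- the coefficient difference of the edge vector. -/
def gassDiff {B : ℕ} (j : Fin (B - 1)) (v : Fin B → ℝ) : ℝ := v (gidx1 j) - v (gidx0 j)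

lemma gidx1_ne_gidx0 {B : ℕ} (i j : Fin (B - 1)) : gidx1 i ≠ gidx0 j := by
  simp [gidx1, gidx0, Fin.ext_iff]

lemma gidx1_inj {B : ℕ} {i j : Fin (B - 1)} : gidx1 i = gidx1 j ↔ i = j := by
  simp [gidx1, Fin.ext_iff]

lemma pi_diff_integrable {B : ℕ} {r : ℝ} (hr : 0 ≤ r) (i : Fin (B - 1)) :
    Integrable (fun a : Fin B → ℝ => gassDiff i a) (Measure.pi fun _ => unifIcc r) := by
  haveI := unifIcc_prob hr
  exact (integrable_pi_eval (unifIcc r) unifIcc_integrable_id (gidx1 i)).sub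
    (integrable_pi_eval (unifIcc r) unifIcc_integrable_id (gidx0 i))

lemma pi_diff_integral {B : ℕ} {r : ℝ} (hr : 0 ≤ r) (i : Fin (B - 1)) :
    ∫ a : Fin B → ℝ, gassDiff i a ∂(Measure.pi fun _ => unifIcc r) = 0 := by
  haveI := unifIcc_prob hr
  have h := integral_sub (integrable_pi_eval (unifIcc r) unifIcc_integrable_id (gidx1 i))
    (integrable_pi_eval (unifIcc r) unifIcc_integrable_id (gidx0 i))
  unfold gassDiff
  rw [h, integral_pi_eval (unifIcc r) (unifIcc_integral_id hr),
    integral_pi_eval (unifIcc r) (unifIcc_integral_id hr), sub_zero]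

lemma pi_diff_mul_integrable {B : ℕ} {r : ℝ} (hr : 0 ≤ r) (i j : Fin (B - 1)) :
    Integrable (fun a : Fin B → ℝ => gassDiff i a * gassDiff j a)
      (Measure.pi fun _ => unifIcc r) := by
  haveI := unifIcc_prob hr
  have h := (((integrable_pi_mul (unifIcc r) unifIcc_integrable_id unifIcc_integrable_sq
      (gidx1 i) (gidx1 j)).sub (integrable_pi_mul (unifIcc r) unifIcc_integrable_id
      unifIcc_integrable_sq (gidx1 i) (gidx0 i))).sub (integrable_pi_mul (unifIcc r)
      unifIcc_integrable_id unifIcc_integrable_sq (gidx0 i) (gidx1 j))).add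
      (integrable_pi_mul (unifIcc r) unifIcc_integrable_id unifIcc_integrable_sq
      (gidx0 i) (gidx0 i))
  refine h.congr (Filter.Eventually.of_forall fun a => ?_)
  have h0 : gidx0 j = gidx0 i := rfl
  simp only [Pi.add_apply, Pi.sub_apply, gassDiff, h0]
  ring

lemma pi_diff_mul_integral {B : ℕ} {r : ℝ} (hr : 0 ≤ r) (i j : Fin (B - 1)) :
    ∫ a : Fin B → ℝ, gassDiff i a * gassDiff j a ∂(Measure.pi fun _ => unifIcc r) =
      (if i = j then 2 else 1) * (r ^ 2 / 3) := by
  haveI := unifIcc_prob hr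
  have h0 : gidx0 j = gidx0 i := rfl
  have hexp : (fun a : Fin B → ℝ => gassDiff i a * gassDiff j a) = fun a =>
      a (gidx1 i) * a (gidx1 j) - a (gidx1 i) * a (gidx0 i) - a (gidx0 i) * a (gidx1 j)
        + a (gidx0 i) * a (gidx0 i) := by
    funext a; simp only [gassDiff, h0]; ring
  have I1 := integrable_pi_mul (unifIcc r) unifIcc_integrable_id unifIcc_integrable_sq
    (gidx1 i) (gidx1 j)
  have I2 := integrable_pi_mul (unifIcc r) unifIcc_integrable_id unifIcc_integrable_sq
    (gidx1 i) (gidx0 i)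
  have I3 := integrable_pi_mul (unifIcc r) unifIcc_integrable_id unifIcc_integrable_sq
    (gidx0 i) (gidx1 j)
  have I4 := integrable_pi_mul (unifIcc r) unifIcc_integrable_id unifIcc_integrable_sq
    (gidx0 i) (gidx0 i)
  have I12 : Integrable (fun a : Fin B → ℝ =>
      a (gidx1 i) * a (gidx1 j) - a (gidx1 i) * a (gidx0 i))
      (Measure.pi fun _ => unifIcc r) := I1.sub I2
  have I123 : Integrable (fun a : Fin B → ℝ =>
      a (gidx1 i) * a (gidx1 j) - a (gidx1 i) * a (gidx0 i) - a (gidx0 i) * a (gidx1 j))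
      (Measure.pi fun _ => unifIcc r) := I12.sub I3
  rw [hexp, integral_add I123 I4, integral_sub I12 I3,
    integral_sub I1 I2,
    integral_pi_mul (unifIcc r) (unifIcc_integral_id hr) (gidx1 i) (gidx1 j),
    integral_pi_mul (unifIcc r) (unifIcc_integral_id hr) (gidx1 i) (gidx0 i),
    integral_pi_mul (unifIcc r) (unifIcc_integral_id hr) (gidx0 i) (gidx1 j),
    integral_pi_mul (unifIcc r) (unifIcc_integral_id hr) (gidx0 i) (gidx0 i)]
  by_cases hij : i = j
  · subst hij
    simp only [gidx1_ne_gidx0 i i, Ne.symm (gidx1_ne_gidx0 i i), if_false, if_true,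
      eq_self_iff_true, unifIcc_integral_sq hr]
    ring
  · simp only [gidx1_inj, hij, gidx1_ne_gidx0 i i, Ne.symm (gidx1_ne_gidx0 j i), if_false,
      eq_self_iff_true, if_true, unifIcc_integral_sq hr]
    ring

lemma gassEdge_expand {d B : ℕ} (e : Fin B → EuclideanSpace ℝ (Fin d))
    (t u : EuclideanSpace ℝ (Fin d)) (δ : (Fin B → ℝ) × (Fin B → ℝ)) (j : Fin (B - 1)) :
    gassEdge e t u δ j = gassEdge e t u 0 j + gassDiff j δ.1 • t + gassDiff j δ.2 • u := by
  show gassPert e t u δ (gidx1 j) - gassPert e t u δ (gidx0 j) = _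
  have h1 : gassEdge e t u 0 j = gassPert e t u 0 (gidx1 j) - gassPert e t u 0 (gidx0 j) := rfl
  rw [h1]
  simp only [gassPert, gassDiff, Prod.fst_zero, Prod.snd_zero, Pi.zero_apply, zero_smul,
    add_zero]
  module

lemma gassGram_expand {d B : ℕ} (e : Fin B → EuclideanSpace ℝ (Fin d))
    (t u : EuclideanSpace ℝ (Fin d)) (ht : ‖t‖ = 1) (hu : ‖u‖ = 1)
    (htu : inner ℝ t u = (0 : ℝ)) (δ : (Fin B → ℝ) × (Fin B → ℝ)) (i j : Fin (B - 1)) :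
    gassGram e t u δ i j =
      gassGram e t u 0 i j +
      ((inner ℝ (gassEdge e t u 0 i) t : ℝ) * gassDiff j δ.1 +
       (inner ℝ (gassEdge e t u 0 j) t : ℝ) * gassDiff i δ.1 +
       (inner ℝ (gassEdge e t u 0 i) u : ℝ) * gassDiff j δ.2 +
       (inner ℝ (gassEdge e t u 0 j) u : ℝ) * gassDiff i δ.2 +
       gassDiff i δ.1 * gassDiff j δ.1 +
       gassDiff i δ.2 * gassDiff j δ.2) := by
  have h1 : (inner ℝ t t : ℝ) = 1 := by
    rw [real_inner_self_eq_norm_mul_norm, ht, mul_one]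
  have h2 : (inner ℝ u u : ℝ) = 1 := by
    rw [real_inner_self_eq_norm_mul_norm, hu, mul_one]
  have h3 : (inner ℝ u t : ℝ) = 0 := by rw [real_inner_comm]; exact htu
  show (inner ℝ (gassEdge e t u δ i) (gassEdge e t u δ j) : ℝ) = _
  rw [gassEdge_expand e t u δ i, gassEdge_expand e t u δ j]
  simp only [inner_add_left, inner_add_right, real_inner_smul_left, real_inner_smul_right,
    h1, h2, h3, htu, mul_one, mul_zero, add_zero]
  rw [real_inner_comm t (gassEdge e t u 0 j), real_inner_comm u (gassEdge e t u 0 j)]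
  show _ = (inner ℝ (gassEdge e t u 0 i) (gassEdge e t u 0 j) : ℝ) + _
  ring

lemma gassGram_posSemidef {d B : ℕ} (e : Fin B → EuclideanSpace ℝ (Fin d))
    (t u : EuclideanSpace ℝ (Fin d)) : (gassGram e t u 0).PosSemidef := by
  refine Matrix.posSemidef_iff_dotProduct_mulVec.mpr ⟨?_, ?_⟩
  · ext i j
    simp only [Matrix.conjTranspose_apply, gassGram, Matrix.of_apply, star_trivial]
    exact real_inner_comm _ _
  · intro x
    have key : dotProduct (star x) (Matrix.mulVec (gassGram e t u 0) x) =
        (inner ℝ (∑ k, x k • gassEdge e t u 0 k) (∑ k, x k • gassEdge e t u 0 k) : ℝ) := by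
      simp only [dotProduct, Matrix.mulVec, star_trivial, gassGram, Matrix.of_apply,
        inner_sum, sum_inner, real_inner_smul_left, real_inner_smul_right, Pi.star_apply]
      refine Finset.sum_congr rfl fun k _ => ?_
      rw [Finset.mul_sum]
      refine Finset.sum_congr rfl fun l _ => ?_
      rw [real_inner_comm (gassEdge e t u 0 k) (gassEdge e t u 0 l)]
      ring
    rw [key]
    exact real_inner_self_nonneg

lemma gassShift_posDef {n : Type*} [Fintype n] [DecidableEq n] {c : ℝ} (hc : 0 < c) :
    (Matrix.diagonal (fun _ : n => c) + Matrix.of fun _ _ : n => c).PosDef := by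
  have hdiag : (Matrix.diagonal fun _ : n => c).PosDef :=
    Matrix.posDef_diagonal_iff.mpr fun _ => hc
  have hJ : (Matrix.of fun _ _ : n => c).PosSemidef := by
    refine Matrix.posSemidef_iff_dotProduct_mulVec.mpr ⟨?_, ?_⟩
    · ext i j; simp [Matrix.conjTranspose_apply]
    · intro x
      have key : dotProduct (star x) (Matrix.mulVec (Matrix.of fun _ _ : n => c) x) =
          c * ((∑ k, x k) * (∑ k, x k)) := by
        simp only [dotProduct, Matrix.mulVec, star_trivial, Matrix.of_apply,
          Pi.star_apply, ← Finset.mul_sum]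
        rw [← Finset.sum_mul]
        ring
      rw [key]
      exact mul_nonneg hc.le (mul_self_nonneg _)
  exact hdiag.add_posSemidef hJ

lemma gass_entry {d B : ℕ} (e : Fin B → EuclideanSpace ℝ (Fin d))
    (t u : EuclideanSpace ℝ (Fin d)) (ht : ‖t‖ = 1) (hu : ‖u‖ = 1)
    (htu : inner ℝ t u = (0 : ℝ)) {r₁ r₂ : ℝ} (hr₁ : 0 ≤ r₁) (hr₂ : 0 ≤ r₂)
    (i j : Fin (B - 1)) :
    ∫ δ, gassGram e t u δ i j ∂(gassMeasure B r₁ r₂) =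
      gassGram e t u 0 i j + (if i = j then 2 else 1) * ((r₁ ^ 2 + r₂ ^ 2) / 3) := by
  haveI := unifIcc_prob hr₁
  haveI := unifIcc_prob hr₂
  set πa := (Measure.pi fun _ : Fin B => unifIcc r₁) with hπa
  set πb := (Measure.pi fun _ : Fin B => unifIcc r₂) with hπb
  have hμ : gassMeasure B r₁ r₂ = πa.prod πb := rfl
  set c1 : ℝ := inner ℝ (gassEdge e t u 0 i) t with hc1
  set c2 : ℝ := inner ℝ (gassEdge e t u 0 j) t with hc2
  set c3 : ℝ := inner ℝ (gassEdge e t u 0 i) u with hc3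
  set c4 : ℝ := inner ℝ (gassEdge e t u 0 j) u with hc4
  have hfun : (fun δ : (Fin B → ℝ) × (Fin B → ℝ) => gassGram e t u δ i j) =
      fun δ => gassGram e t u 0 i j +
        (c1 * gassDiff j δ.1 + c2 * gassDiff i δ.1 + c3 * gassDiff j δ.2 +
         c4 * gassDiff i δ.2 + gassDiff i δ.1 * gassDiff j δ.1 +
         gassDiff i δ.2 * gassDiff j δ.2) :=
    funext fun δ => gassGram_expand e t u ht hu htu δ i j
  have hT1 : Integrable (fun δ : (Fin B → ℝ) × (Fin B → ℝ) => c1 * gassDiff j δ.1)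
      (πa.prod πb) := integrable_lift_fst πa πb ((pi_diff_integrable hr₁ j).const_mul c1)
  have hT2 : Integrable (fun δ : (Fin B → ℝ) × (Fin B → ℝ) => c2 * gassDiff i δ.1)
      (πa.prod πb) := integrable_lift_fst πa πb ((pi_diff_integrable hr₁ i).const_mul c2)
  have hT3 : Integrable (fun δ : (Fin B → ℝ) × (Fin B → ℝ) => c3 * gassDiff j δ.2)
      (πa.prod πb) := integrable_lift_snd πa πb ((pi_diff_integrable hr₂ j).const_mul c3)
  have hT4 : Integrable (fun δ : (Fin B → ℝ) × (Fin B → ℝ) => c4 * gassDiff i δ.2)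
      (πa.prod πb) := integrable_lift_snd πa πb ((pi_diff_integrable hr₂ i).const_mul c4)
  have hT5 : Integrable (fun δ : (Fin B → ℝ) × (Fin B → ℝ) =>
      gassDiff i δ.1 * gassDiff j δ.1) (πa.prod πb) :=
    integrable_lift_fst πa πb (pi_diff_mul_integrable hr₁ i j)
  have hT6 : Integrable (fun δ : (Fin B → ℝ) × (Fin B → ℝ) =>
      gassDiff i δ.2 * gassDiff j δ.2) (πa.prod πb) :=
    integrable_lift_snd πa πb (pi_diff_mul_integrable hr₂ i j)
  have vT1 : ∫ δ, c1 * gassDiff j δ.1 ∂(πa.prod πb) = 0 := by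
    rw [integral_lift_fst (g := fun a => c1 * gassDiff j a) πa πb
      ((pi_diff_integrable hr₁ j).const_mul c1).aestronglyMeasurable,
      integral_const_mul _ _, pi_diff_integral hr₁, mul_zero]
  have vT2 : ∫ δ, c2 * gassDiff i δ.1 ∂(πa.prod πb) = 0 := by
    rw [integral_lift_fst (g := fun a => c2 * gassDiff i a) πa πb
      ((pi_diff_integrable hr₁ i).const_mul c2).aestronglyMeasurable,
      integral_const_mul _ _, pi_diff_integral hr₁, mul_zero]
  have vT3 : ∫ δ, c3 * gassDiff j δ.2 ∂(πa.prod πb) = 0 := by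
    rw [integral_lift_snd (g := fun a => c3 * gassDiff j a) πa πb
      ((pi_diff_integrable hr₂ j).const_mul c3).aestronglyMeasurable,
      integral_const_mul _ _, pi_diff_integral hr₂, mul_zero]
  have vT4 : ∫ δ, c4 * gassDiff i δ.2 ∂(πa.prod πb) = 0 := by
    rw [integral_lift_snd (g := fun a => c4 * gassDiff i a) πa πb
      ((pi_diff_integrable hr₂ i).const_mul c4).aestronglyMeasurable,
      integral_const_mul _ _, pi_diff_integral hr₂, mul_zero]
  have vT5 : ∫ δ, gassDiff i δ.1 * gassDiff j δ.1 ∂(πa.prod πb) =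
      (if i = j then 2 else 1) * (r₁ ^ 2 / 3) := by
    rw [integral_lift_fst (g := fun a => gassDiff i a * gassDiff j a) πa πb
      (pi_diff_mul_integrable hr₁ i j).aestronglyMeasurable, pi_diff_mul_integral hr₁]
  have vT6 : ∫ δ, gassDiff i δ.2 * gassDiff j δ.2 ∂(πa.prod πb) =
      (if i = j then 2 else 1) * (r₂ ^ 2 / 3) := by
    rw [integral_lift_snd (g := fun a => gassDiff i a * gassDiff j a) πa πb
      (pi_diff_mul_integrable hr₂ i j).aestronglyMeasurable, pi_diff_mul_integral hr₂]
  have S2 : Integrable (fun δ : (Fin B → ℝ) × (Fin B → ℝ) =>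
      c1 * gassDiff j δ.1 + c2 * gassDiff i δ.1) (πa.prod πb) := hT1.add hT2
  have S3 : Integrable (fun δ : (Fin B → ℝ) × (Fin B → ℝ) =>
      c1 * gassDiff j δ.1 + c2 * gassDiff i δ.1 + c3 * gassDiff j δ.2) (πa.prod πb) :=
    S2.add hT3
  have S4 : Integrable (fun δ : (Fin B → ℝ) × (Fin B → ℝ) =>
      c1 * gassDiff j δ.1 + c2 * gassDiff i δ.1 + c3 * gassDiff j δ.2 +
        c4 * gassDiff i δ.2) (πa.prod πb) := S3.add hT4
  have S5 : Integrable (fun δ : (Fin B → ℝ) × (Fin B → ℝ) =>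
      c1 * gassDiff j δ.1 + c2 * gassDiff i δ.1 + c3 * gassDiff j δ.2 +
        c4 * gassDiff i δ.2 + gassDiff i δ.1 * gassDiff j δ.1) (πa.prod πb) := S4.add hT5
  have S6 : Integrable (fun δ : (Fin B → ℝ) × (Fin B → ℝ) =>
      c1 * gassDiff j δ.1 + c2 * gassDiff i δ.1 + c3 * gassDiff j δ.2 +
        c4 * gassDiff i δ.2 + gassDiff i δ.1 * gassDiff j δ.1 +
        gassDiff i δ.2 * gassDiff j δ.2) (πa.prod πb) := S5.add hT6
  rw [hμ, hfun]
  rw [integral_add (integrable_const _) S6, integral_add S5 hT6, integral_add S4 hT5,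
    integral_add S3 hT4, integral_add S2 hT3, integral_add hT1 hT2,
    vT1, vT2, vT3, vT4, vT5, vT6, integral_const]
  haveI : IsProbabilityMeasure (πa.prod πb) := by infer_instance
  rw [probReal_univ, one_smul]
  by_cases hij : i = j
  · rw [if_pos hij]; ring
  · rw [if_neg hij]; ring

end GassAux
/-- **Strict determinant increase of the expected GASS Gram matrix.** For `B ≥ 2` points
`e₁, …, e_B ∈ ℝᵈ` perturbed along two orthonormal directions `t, u` by independent uniform
shifts on `[-r₁, r₁]` and `[-r₂, r₂]`, if `r₁² + r₂² > 0` then the determinant of the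
entrywise expected Gram matrix strictly exceeds the unperturbed Gram determinant:
`det (E[G̃(δ)]) > det (G̃(0))`. -/
theorem gass_expected_gram_det_gt {d B : ℕ} (hB : 2 ≤ B)
    (e : Fin B → EuclideanSpace ℝ (Fin d)) (t u : EuclideanSpace ℝ (Fin d))
    (ht : ‖t‖ = 1) (hu : ‖u‖ = 1) (htu : inner ℝ t u = (0 : ℝ))
    {r₁ r₂ : ℝ} (hr₁ : 0 ≤ r₁) (hr₂ : 0 ≤ r₂) (hr : 0 < r₁ ^ 2 + r₂ ^ 2) :
    (Matrix.of fun i j => ∫ δ, gassGram e t u δ i j ∂(gassMeasure B r₁ r₂)).det >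
      (gassGram e t u 0).det := by
  haveI : Nonempty (Fin (B - 1)) := ⟨⟨0, by omega⟩⟩
  have hc : 0 < (r₁ ^ 2 + r₂ ^ 2) / 3 := by linarith
  have hmat : (Matrix.of fun i j => ∫ δ, gassGram e t u δ i j ∂(gassMeasure B r₁ r₂)) =
      gassGram e t u 0 + (Matrix.diagonal (fun _ : Fin (B - 1) => (r₁ ^ 2 + r₂ ^ 2) / 3) +
        Matrix.of fun _ _ : Fin (B - 1) => (r₁ ^ 2 + r₂ ^ 2) / 3) := by
    ext i j
    simp only [Matrix.of_apply, Matrix.add_apply, Matrix.diagonal_apply]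
    rw [gass_entry e t u ht hu htu hr₁ hr₂ i j]
    split_ifs <;> ring
  rw [hmat]
  exact det_lt_det_add_of_posDef (gassGram_posSemidef e t u) (gassShift_posDef hc)
end
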